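/- Let τ_s > 0 and D_s > 0 with D_s > (π/2)·τ_s. Then there exists a complex root λ of the characteristic equation τ_s·λ + e^{−λ·D_s} = 0 with Re(λ) > 0; i.e., above the Hopf line D_s = (π/2)·τ_s the characteristic equation has a root with positive real part and solutions of the delay equation diverge (instability). -/

import Mathlib

/-- Above the Hopf line (`D_s > (π/2)·τ_s`), there is a characteristic root with
positive real part. -/
theorem stmt16 (τs Ds : ℝ) (hτ : 0 < τs) (hD : 0 < Ds) (h : (Real.pi / 2) * τs < Ds) :
    ∃ lam : ℂ, (τs : ℂ) * lam + Complex.exp (-lam * Ds) = 0 ∧ 0 < lam.re := by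
  have hπ := Real.pi_pos
  set a := Ds / τs with ha_def
  have ha : Real.pi / 2 < a := by
    rw [ha_def, lt_div_iff₀ hτ]; linarith
  have ha0 : 0 < a := lt_trans (by positivity) ha
  set ε := Real.pi / (4 * a) with hε_def
  have hε0 : 0 < ε := by positivity
  have hεlt : ε < Real.pi / 2 := by
    rw [hε_def, div_lt_div_iff₀ (by positivity) (by positivity)]
    have h3 := Real.pi_gt_three
    nlinarith [mul_pos hπ (show (0:ℝ) < 4*a - 2 by nlinarith)]
  set y1 := Real.pi - ε with hy1_def
  have hy1a : Real.pi / 2 < y1 := by rw [hy1_def]; linarith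
  have hy1b : y1 < Real.pi := by rw [hy1_def]; linarith
  have hy10 : 0 < y1 := by linarith
  set g : ℝ → ℝ := fun y => Real.log (a * Real.sin y / y) + y * Real.cos y / Real.sin y
    with hg_def
  -- g (π/2) > 0
  have hgA : 0 < g (Real.pi / 2) := by
    have : g (Real.pi / 2) = Real.log (a / (Real.pi / 2)) := by
      simp [hg_def, Real.sin_pi_div_two, Real.cos_pi_div_two]
    rw [this]
    apply Real.log_pos
    rw [lt_div_iff₀ (by positivity)]
    linarith
  -- g y1 < 0
  have hsin1 : 0 < Real.sin y1 := Real.sin_pos_of_pos_of_lt_pi hy10 hy1b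
  have hsin1le : Real.sin y1 ≤ ε := by
    rw [hy1_def, Real.sin_pi_sub]
    exact le_of_lt (Real.sin_lt hε0)
  have hcos1 : Real.cos y1 < 0 :=
    Real.cos_neg_of_pi_div_two_lt_of_lt hy1a (by linarith)
  have hgB : g y1 < 0 := by
    have h1 : Real.log (a * Real.sin y1 / y1) < 0 := by
      apply Real.log_neg (by positivity)
      rw [div_lt_one hy10]
      have : a * Real.sin y1 ≤ a * ε := by nlinarith
      have haε : a * ε = Real.pi / 4 := by
        rw [hε_def]; field_simp
      nlinarith
    have h2 : y1 * Real.cos y1 / Real.sin y1 < 0 := by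
      apply div_neg_of_neg_of_pos _ hsin1
      nlinarith
    simp only [hg_def]
    linarith
  -- continuity of g on [π/2, y1]
  have hcont : ContinuousOn g (Set.Icc (Real.pi / 2) y1) := by
    have hsinpos : ∀ y ∈ Set.Icc (Real.pi / 2) y1, 0 < Real.sin y := by
      intro y hy
      exact Real.sin_pos_of_pos_of_lt_pi (by linarith [hy.1]) (by linarith [hy.2])
    have hypos : ∀ y ∈ Set.Icc (Real.pi / 2) y1, (0:ℝ) < y := by
      intro y hy; linarith [hy.1]
    apply ContinuousOn.add
    · apply ContinuousOn.log
      · exact ((continuous_const.mul Real.continuous_sin).continuousOn).div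
          continuousOn_id (fun y hy => ne_of_gt (hypos y hy))
      · intro y hy
        have := hsinpos y hy
        have := hypos y hy
        positivity
    · exact ((continuous_id.mul Real.continuous_cos).continuousOn).div
        Real.continuous_sin.continuousOn (fun y hy => ne_of_gt (hsinpos y hy))
  -- IVT
  have hmem : (0:ℝ) ∈ Set.Icc (g y1) (g (Real.pi / 2)) := ⟨le_of_lt hgB, le_of_lt hgA⟩
  obtain ⟨y, hyIcc, hgy⟩ := intermediate_value_Icc' (le_of_lt hy1a) hcont hmem
  have hy0 : 0 < y := by linarith [hyIcc.1]
  have hyπ : y < Real.pi := by linarith [hyIcc.2]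
  have hsiny : 0 < Real.sin y := Real.sin_pos_of_pos_of_lt_pi hy0 hyπ
  have hyne : y ≠ Real.pi / 2 := by
    intro hc; rw [hc] at hgy; linarith
  have hygt : Real.pi / 2 < y := lt_of_le_of_ne hyIcc.1 (Ne.symm hyne)
  have hcosy : Real.cos y < 0 :=
    Real.cos_neg_of_pi_div_two_lt_of_lt hygt (by linarith)
  set x := Real.log (a * Real.sin y / y) with hx_def
  -- from g y = 0 : x + y cos y / sin y = 0
  have hgy' : x + y * Real.cos y / Real.sin y = 0 := hgy
  have hxpos : 0 < x := by
    have : x = -(y * Real.cos y / Real.sin y) := by linarith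
    rw [this]
    apply neg_pos.mpr
    apply div_neg_of_neg_of_pos _ hsiny
    nlinarith
  have hexp : Real.exp (-x) = y / (a * Real.sin y) := by
    rw [Real.exp_neg, hx_def, Real.exp_log (by positivity)]
    rw [inv_div]
  -- key real identities
  have key1 : x * Real.sin y + y * Real.cos y = 0 := by
    have := hgy'
    field_simp at this
    linarith
  refine ⟨⟨x / Ds, y / Ds⟩, ?_, ?_⟩
  · have hre : (-(⟨x / Ds, y / Ds⟩ : ℂ) * (Ds : ℂ)).re = -x := by
      simp [Complex.mul_re]
      field_simp
    have him : (-(⟨x / Ds, y / Ds⟩ : ℂ) * (Ds : ℂ)).im = -y := by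
      simp [Complex.mul_im]
      field_simp
    apply Complex.ext
    · simp only [Complex.add_re, Complex.mul_re, Complex.ofReal_re, Complex.ofReal_im,
        Complex.exp_re, hre, him]
      rw [Real.cos_neg, hexp]
      have hane : (a : ℝ) ≠ 0 := ne_of_gt ha0
      have : τs * (x / Ds) = x / a := by
        rw [ha_def]; field_simp
      rw [this]
      simp only [zero_mul, sub_zero, Complex.zero_re]
      have hs : Real.sin y ≠ 0 := ne_of_gt hsiny
      have ha' : a ≠ 0 := ne_of_gt ha0
      field_simp
      linear_combination key1
    · simp only [Complex.add_im, Complex.mul_im, Complex.ofReal_re, Complex.ofReal_im,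
        Complex.exp_im, hre, him]
      rw [Real.sin_neg, hexp]
      have : τs * (y / Ds) = y / a := by
        rw [ha_def]; field_simp
      rw [this]
      simp only [zero_mul, add_zero, Complex.zero_im]
      have hs : Real.sin y ≠ 0 := ne_of_gt hsiny
      have ha' : a ≠ 0 := ne_of_gt ha0
      field_simp
      ring
  · simp only [Complex.div_re]
    positivity
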